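/- arXiv:1503.05858 — 4 statements merged into one kernel-verified Lean document; each statement's English description precedes it below -/
import Mathlib

section
/- Let q > 2 be a power of two, F_s a subfield of F_q, A = {a ∈ F_q : Tr_{q,s}(a) = 1}, B ⊆ F_s*, and D = {ab : a ∈ A, b ∈ B}. Let χ be a nontrivial multiplicative character of F_q* and χ* its restriction to F_s*. Then χ(D) = (χ*(B)/G(χ*))·G(χ) if χ* is nontrivial, and χ(D) = −(χ*(B)/s)·G(χ) if χ* is trivial. -/
open scoped Classical
open Finset

section Aux
set_option linter.unusedSectionVars false
variable (F : Type*) [Field F] [Fintype F] [CharP F 2] [Algebra (ZMod 2) F]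

noncomputable def gmwPsi : F → ℂ := fun y => (-1 : ℂ) ^ (Algebra.trace (ZMod 2) F y).val

lemma gmwPsi_apply (y : F) : gmwPsi F y = (-1 : ℂ) ^ (Algebra.trace (ZMod 2) F y).val := rfl

variable {F}

lemma gmwPsi_zero : gmwPsi F 0 = 1 := by simp [gmwPsi]

lemma gmwPsi_add (x y : F) : gmwPsi F (x + y) = gmwPsi F x * gmwPsi F y := by
  unfold gmwPsi
  rw [map_add]
  generalize (Algebra.trace (ZMod 2) F) x = u
  generalize (Algebra.trace (ZMod 2) F) y = v
  have h : ((u + v).val + 2 * ((u.val + v.val) / 2)) = u.val + v.val := by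
    rw [ZMod.val_add]; exact Nat.mod_add_div _ _
  calc (-1 : ℂ) ^ (u + v).val = (-1) ^ ((u+v).val + 2 * ((u.val + v.val)/2)) := by
        rw [pow_add, pow_mul]; norm_num
    _ = (-1) ^ (u.val + v.val) := by rw [h]
    _ = _ := pow_add _ _ _

lemma gmwPsi_sum : ∑ y : F, gmwPsi F y = 0 := by
  have : FiniteDimensional (ZMod 2) F := Module.Finite.of_finite
  obtain ⟨c, hc⟩ := Algebra.trace_surjective (ZMod 2) F 1
  have hcne : gmwPsi F c = -1 := by rw [gmwPsi_apply, hc]; norm_num [ZMod.val_one]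
  have hre : ∑ y : F, gmwPsi F (c + y) = ∑ y : F, gmwPsi F y :=
    Fintype.sum_equiv (Equiv.addLeft c) _ _ (fun y => rfl)
  have h1 : ∑ y : F, gmwPsi F y = gmwPsi F c * ∑ y : F, gmwPsi F y := by
    rw [Finset.mul_sum]
    calc ∑ y : F, gmwPsi F y = ∑ y : F, gmwPsi F (c + y) := hre.symm
      _ = _ := Finset.sum_congr rfl fun y _ => gmwPsi_add c y
  rw [hcne] at h1
  have h2 : (2 : ℂ) * ∑ y : F, gmwPsi F y = 0 := by linear_combination h1
  have := mul_eq_zero.mp h2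
  simpa using this

lemma gmwPsi_sum_ne_zero : ∑ y ∈ Finset.univ.filter (fun y : F => y ≠ 0), gmwPsi F y = -1 := by
  have h := gmwPsi_sum (F := F)
  rw [Finset.filter_ne']
  have h2 := Finset.add_sum_erase Finset.univ (gmwPsi F) (Finset.mem_univ (0 : F))
  rw [h, gmwPsi_zero] at h2
  linear_combination h2

lemma gmwPsi_sum_mul (c : F) (hc : c ≠ 0) :
    ∑ u ∈ Finset.univ.filter (fun u : F => u ≠ 0), gmwPsi F (u * c) = -1 := by
  rw [← gmwPsi_sum_ne_zero (F := F)]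
  refine Finset.sum_equiv (Equiv.mulRight₀ c hc) (fun u => ?_) (fun u _ => rfl)
  simp [hc]

lemma gmwPsi_sum_mul_all (c : F) (hc : c ≠ 0) :
    ∑ u : F, gmwPsi F (u * c) = 0 := by
  rw [← gmwPsi_sum (F := F)]
  exact Fintype.sum_equiv (Equiv.mulRight₀ c hc) _ _ (fun u => rfl)

lemma card_filter_ne_zero : (((Finset.univ.filter (fun y : F => y ≠ 0)).card : ℂ)) =
    (Fintype.card F : ℂ) - 1 := by
  rw [Finset.filter_ne', Finset.card_erase_of_mem (Finset.mem_univ _), Finset.card_univ]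
  have : 1 ≤ Fintype.card F := Fintype.card_pos
  push_cast [Nat.cast_sub this]
  ring

end Aux

/-- Character values of the Gordon-Mills-Welch construction: with `q > 2` a power of two,
`A = {a ∈ F_q : Tr_{q,s}(a) = 1}`, `B ⊆ F_s*`, `D = {ab : a ∈ A, b ∈ B}` and `χ` a nontrivial
multiplicative character of `F_q*` with restriction `χ*` to `F_s*`, we have
`χ(D) = χ*(B)/G(χ*) · G(χ)` if `χ*` is nontrivial and `χ(D) = -(χ*(B)/s) · G(χ)` otherwise,
where `G` denotes the canonical Gauss sum (with the additive character `y ↦ (-1)^{Tr(y)}`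
since the characteristic is `2`). -/
theorem gmw_char_values (Fs Fq : Type*) [Field Fs] [Field Fq] [Fintype Fs] [Fintype Fq]
    [Algebra Fs Fq] [CharP Fs 2] [CharP Fq 2] [Algebra (ZMod 2) Fs] [Algebra (ZMod 2) Fq]
    (hq : 2 < Fintype.card Fq)
    (B : Finset Fs) (hB : (0 : Fs) ∉ B)
    (A : Finset Fq) (hA : ∀ a : Fq, a ∈ A ↔ Algebra.trace Fs Fq a = 1)
    (D : Finset Fq) (hD : ∀ d : Fq, d ∈ D ↔ ∃ a ∈ A, ∃ b ∈ B, d = a * algebraMap Fs Fq b)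
    (χ : MulChar Fq ℂ) (hχ : χ ≠ 1) :
    ((∃ b : Fs, b ≠ 0 ∧ χ (algebraMap Fs Fq b) ≠ 1) →
      ∑ d ∈ D, χ d =
        (∑ b ∈ B, χ (algebraMap Fs Fq b)) /
          (∑ y ∈ Finset.univ.filter (fun y : Fs => y ≠ 0),
            χ (algebraMap Fs Fq y) * (-1 : ℂ) ^ (Algebra.trace (ZMod 2) Fs y).val) *
          (∑ y ∈ Finset.univ.filter (fun y : Fq => y ≠ 0),
            χ y * (-1 : ℂ) ^ (Algebra.trace (ZMod 2) Fq y).val)) ∧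
    ((∀ b : Fs, b ≠ 0 → χ (algebraMap Fs Fq b) = 1) →
      ∑ d ∈ D, χ d =
        -((∑ b ∈ B, χ (algebraMap Fs Fq b)) / (Fintype.card Fs : ℂ)) *
          (∑ y ∈ Finset.univ.filter (fun y : Fq => y ≠ 0),
            χ y * (-1 : ℂ) ^ (Algebra.trace (ZMod 2) Fq y).val)) := by
  simp only [← gmwPsi_apply]
  haveI : IsScalarTower (ZMod 2) Fs Fq := by
    refine IsScalarTower.of_algebraMap_eq fun x => ?_
    have h : (algebraMap (ZMod 2) Fq) = (algebraMap Fs Fq).comp (algebraMap (ZMod 2) Fs) :=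
      Subsingleton.elim _ _
    rw [h]; rfl
  haveI : FiniteDimensional (ZMod 2) Fs := Module.Finite.of_finite
  haveI : FiniteDimensional Fs Fq := Module.Finite.of_finite
  set em := algebraMap Fs Fq with hem
  have hemi : Function.Injective em := (algebraMap Fs Fq).injective
  have hemne : ∀ b : Fs, b ≠ 0 → em b ≠ 0 := by
    intro b hb h0
    exact hb (hemi (by simpa using h0))
  set G : ℂ := ∑ y ∈ Finset.univ.filter (fun y : Fq => y ≠ 0), χ y * gmwPsi Fq y with hG
  set SB : ℂ := ∑ b ∈ B, χ (em b) with hSB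
  set SA : ℂ := ∑ a ∈ A, χ a with hSA
  set Gbar : ℂ := ∑ u ∈ Finset.univ.filter (fun u : Fs => u ≠ 0), χ (em u⁻¹) * gmwPsi Fs u
    with hGbar
  set Gs : ℂ := ∑ y ∈ Finset.univ.filter (fun y : Fs => y ≠ 0), χ (em y) * gmwPsi Fs y with hGs
  have hcard0 : (Fintype.card Fs : ℂ) ≠ 0 := by
    exact_mod_cast Nat.cast_ne_zero.mpr Fintype.card_pos.ne'
  -- trace key fact
  have hkey : ∀ a : Fq, ∀ b : Fs, Algebra.trace Fs Fq (a * em b) = b * Algebra.trace Fs Fq a := by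
    intro a b
    have h1 : a * em b = b • a := by rw [Algebra.smul_def]; ring
    rw [h1, map_smul, smul_eq_mul]
  -- factorization
  have hfact : ∑ d ∈ D, χ d = SA * SB := by
    have hDim : D = (A ×ˢ B).image (fun p => p.1 * em p.2) := by
      ext d
      simp only [hD, Finset.mem_image, Finset.mem_product, Prod.exists]
      constructor
      · rintro ⟨a, ha, b, hb, rfl⟩; exact ⟨a, b, ⟨ha, hb⟩, rfl⟩
      · rintro ⟨a, b, ⟨ha, hb⟩, rfl⟩; exact ⟨a, ha, b, hb, rfl⟩
    have hinj : ∀ p ∈ A ×ˢ B, ∀ q ∈ A ×ˢ B,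
        p.1 * em p.2 = q.1 * em q.2 → p = q := by
      rintro ⟨a1, b1⟩ hp ⟨a2, b2⟩ hq h
      rw [Finset.mem_product] at hp hq
      have htr : b1 = b2 := by
        have h1 := hkey a1 b1
        have h2 := hkey a2 b2
        rw [(hA a1).mp hp.1, mul_one] at h1
        rw [(hA a2).mp hq.1, mul_one] at h2
        rw [← h1, ← h2, h]
      subst htr
      have hb1 : b1 ≠ 0 := fun h0 => hB (h0 ▸ hp.2)
      have h2 := mul_right_cancel₀ (hemne b1 hb1) h
      exact Prod.ext h2 rfl
    rw [hDim, Finset.sum_image hinj, Finset.sum_product]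
    simp_rw [map_mul χ, ← Finset.mul_sum, ← Finset.sum_mul]
    rfl
  -- bridge
  have hbridge : ∀ (u : Fs) (a : Fq),
      gmwPsi Fq (em u * a) = gmwPsi Fs (u * Algebra.trace Fs Fq a) := by
    intro u a
    have htr : Algebra.trace (ZMod 2) Fq (em u * a)
        = Algebra.trace (ZMod 2) Fs (u * Algebra.trace Fs Fq a) := by
      rw [← Algebra.trace_trace (S := Fs) (T := Fq), mul_comm (em u) a, hkey]
    rw [gmwPsi_apply, gmwPsi_apply, htr]
  -- full Gauss sum
  have hG' : ∑ a : Fq, χ a * gmwPsi Fq a = G := by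
    rw [hG]
    refine (Finset.sum_filter_of_ne fun a _ h0 => ?_).symm
    intro ha0
    apply h0
    rw [ha0, MulChar.map_zero, zero_mul]
  -- shifted sums
  have hT : ∀ u : Fs, u ≠ 0 →
      ∑ a : Fq, χ a * gmwPsi Fq (em u * a) = χ (em u⁻¹) * G := by
    intro u hu
    have huinv : (u⁻¹ : Fs) ≠ 0 := inv_ne_zero hu
    have hre : ∑ y : Fq, χ (em u⁻¹ * y) * gmwPsi Fq (em u * (em u⁻¹ * y))
        = ∑ a : Fq, χ a * gmwPsi Fq (em u * a) :=
      Fintype.sum_equiv (Equiv.mulLeft₀ (em u⁻¹) (hemne _ huinv)) _ _ (fun y => rfl)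
    have hcanc : ∀ y : Fq, em u * (em u⁻¹ * y) = y := by
      intro y
      rw [← mul_assoc, ← map_mul, mul_inv_cancel₀ hu, map_one, one_mul]
    rw [← hre]
    simp_rw [hcanc, map_mul χ, mul_assoc, ← Finset.mul_sum, hG']
  -- main computation: card * SA = Gbar * G
  have hmain : (Fintype.card Fs : ℂ) * SA = Gbar * G := by
    have hAfilter : A = Finset.univ.filter (fun a : Fq => Algebra.trace Fs Fq a = 1) := by
      ext a; simp [hA a]
    have step1 : ∑ a : Fq, χ a * (∑ u : Fs, gmwPsi Fs (u * (Algebra.trace Fs Fq a + 1)))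
        = (Fintype.card Fs : ℂ) * SA := by
      have : ∀ a : Fq, χ a * (∑ u : Fs, gmwPsi Fs (u * (Algebra.trace Fs Fq a + 1)))
          = if Algebra.trace Fs Fq a = 1 then χ a * (Fintype.card Fs : ℂ) else 0 := by
        intro a
        by_cases h : Algebra.trace Fs Fq a = 1
        · rw [if_pos h, h]
          have h0 : (1 : Fs) + 1 = 0 := CharTwo.add_self_eq_zero 1
          simp [h0, gmwPsi_zero]
        · rw [if_neg h]
          have hne : Algebra.trace Fs Fq a + 1 ≠ 0 := by
            intro h0
            apply h
            have : Algebra.trace Fs Fq a = -1 := by linear_combination h0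
            rw [this, CharTwo.neg_eq]
          rw [gmwPsi_sum_mul_all _ hne, mul_zero]
      rw [Finset.sum_congr rfl (fun a _ => this a), ← Finset.sum_filter, ← hAfilter, hSA,
        Finset.mul_sum]
      exact Finset.sum_congr rfl fun a _ => mul_comm _ _
    have step2 : ∑ a : Fq, χ a * (∑ u : Fs, gmwPsi Fs (u * (Algebra.trace Fs Fq a + 1)))
        = ∑ u : Fs, gmwPsi Fs u * ∑ a : Fq, χ a * gmwPsi Fq (em u * a) := by
      have expand : ∀ (a : Fq) (u : Fs), gmwPsi Fs (u * (Algebra.trace Fs Fq a + 1))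
          = gmwPsi Fq (em u * a) * gmwPsi Fs u := by
        intro a u
        rw [mul_add, mul_one, gmwPsi_add, hbridge]
      simp_rw [expand, Finset.mul_sum]
      rw [Finset.sum_comm]
      exact Finset.sum_congr rfl fun u _ => Finset.sum_congr rfl fun a _ => by ring
    have step3 : ∑ u : Fs, gmwPsi Fs u * ∑ a : Fq, χ a * gmwPsi Fq (em u * a) = Gbar * G := by
      have hzero : gmwPsi Fs (0 : Fs) * ∑ a : Fq, χ a * gmwPsi Fq (em 0 * a) = 0 := by
        have : ∀ a : Fq, χ a * gmwPsi Fq (em (0:Fs) * a) = χ a := by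
          intro a; rw [map_zero, zero_mul, gmwPsi_zero, mul_one]
        rw [Finset.sum_congr rfl (fun a _ => this a), MulChar.sum_eq_zero_of_ne_one hχ,
          mul_zero]
      rw [← Finset.sum_filter_add_sum_filter_not Finset.univ (fun u : Fs => u ≠ 0)]
      have hnotfilter : Finset.univ.filter (fun u : Fs => ¬ u ≠ 0) = {0} := by
        ext u; simp
      rw [hnotfilter, Finset.sum_singleton, hzero, add_zero, hGbar, Finset.sum_mul]
      refine Finset.sum_congr rfl fun u hu => ?_
      rw [Finset.mem_filter] at hu
      rw [hT u hu.2]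
      ring
    rw [← step1, step2, step3]
  refine ⟨?_, ?_⟩
  · -- nontrivial case
    rintro ⟨b, hb0, hb1⟩
    -- character sum over Fs* vanishes
    have hSigma : ∑ v ∈ Finset.univ.filter (fun v : Fs => v ≠ 0), χ (em v) = 0 := by
      have hre : ∑ v ∈ Finset.univ.filter (fun v : Fs => v ≠ 0), χ (em (b * v))
          = ∑ v ∈ Finset.univ.filter (fun v : Fs => v ≠ 0), χ (em v) := by
        refine Finset.sum_equiv (Equiv.mulLeft₀ b hb0) (fun v => ?_) (fun v _ => rfl)
        simp [hb0]
      have heq : ∑ v ∈ Finset.univ.filter (fun v : Fs => v ≠ 0), χ (em (b * v))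
          = χ (em b) * ∑ v ∈ Finset.univ.filter (fun v : Fs => v ≠ 0), χ (em v) := by
        rw [Finset.mul_sum]
        exact Finset.sum_congr rfl fun v _ => by rw [map_mul, map_mul]
      have : (χ (em b) - 1) * ∑ v ∈ Finset.univ.filter (fun v : Fs => v ≠ 0), χ (em v) = 0 := by
        rw [sub_mul, one_mul, ← heq, hre, sub_self]
      rcases mul_eq_zero.mp this with h | h
      · exact absurd (by linear_combination h) hb1
      · exact h
    -- Gauss sum product
    have hprod : Gs * Gbar = (Fintype.card Fs : ℂ) := by
      rw [hGs, hGbar, Finset.sum_mul_sum]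
      have inner : ∀ u ∈ Finset.univ.filter (fun u : Fs => u ≠ 0),
          ∑ y ∈ Finset.univ.filter (fun y : Fs => y ≠ 0),
            (χ (em y) * gmwPsi Fs y) * (χ (em u⁻¹) * gmwPsi Fs u)
          = ∑ v ∈ Finset.univ.filter (fun v : Fs => v ≠ 0),
              χ (em v) * gmwPsi Fs (u * (v + 1)) := by
        intro u hu
        rw [Finset.mem_filter] at hu
        have hu0 := hu.2
        have hre : ∑ v ∈ Finset.univ.filter (fun v : Fs => v ≠ 0),
            (χ (em (u * v)) * gmwPsi Fs (u * v)) * (χ (em u⁻¹) * gmwPsi Fs u)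
            = ∑ y ∈ Finset.univ.filter (fun y : Fs => y ≠ 0),
              (χ (em y) * gmwPsi Fs y) * (χ (em u⁻¹) * gmwPsi Fs u) := by
          refine Finset.sum_equiv (Equiv.mulLeft₀ u hu0) (fun v => ?_) (fun v _ => rfl)
          simp [hu0]
        rw [← hre]
        refine Finset.sum_congr rfl fun v hv => ?_
        rw [Finset.mem_filter] at hv
        have hchi : χ (em (u * v)) * χ (em u⁻¹) = χ (em v) := by
          rw [← map_mul, ← map_mul]
          congr 2
          field_simp
        have hpsi : gmwPsi Fs (u * v) * gmwPsi Fs u = gmwPsi Fs (u * (v + 1)) := by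
          rw [mul_add, mul_one, gmwPsi_add]
        calc (χ (em (u * v)) * gmwPsi Fs (u * v)) * (χ (em u⁻¹) * gmwPsi Fs u)
            = (χ (em (u * v)) * χ (em u⁻¹)) * (gmwPsi Fs (u * v) * gmwPsi Fs u) := by ring
          _ = χ (em v) * gmwPsi Fs (u * (v + 1)) := by rw [hchi, hpsi]
      rw [Finset.sum_comm, Finset.sum_congr rfl inner, Finset.sum_comm]
      have inner2 : ∀ v ∈ Finset.univ.filter (fun v : Fs => v ≠ 0),
          ∑ u ∈ Finset.univ.filter (fun u : Fs => u ≠ 0), χ (em v) * gmwPsi Fs (u * (v + 1))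
          = (if v = 1 then χ (em v) * (Fintype.card Fs : ℂ) else 0) + (- χ (em v)) := by
        intro v hv
        rw [← Finset.mul_sum]
        by_cases h1 : v = 1
        · rw [if_pos h1, h1]
          have h0 : (1 : Fs) + 1 = 0 := CharTwo.add_self_eq_zero 1
          simp only [h0, mul_zero, gmwPsi_zero]
          rw [Finset.sum_const, nsmul_eq_mul, mul_one, card_filter_ne_zero]
          ring
        · rw [if_neg h1]
          have hne : v + 1 ≠ 0 := by
            intro h0
            apply h1
            have hv1 : v = -1 := by linear_combination h0
            rw [hv1, CharTwo.neg_eq]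
          rw [gmwPsi_sum_mul _ hne, zero_add]
          ring
      rw [Finset.sum_congr rfl inner2, Finset.sum_add_distrib, Finset.sum_ite_eq']
      have h1mem : (1 : Fs) ∈ Finset.univ.filter (fun v : Fs => v ≠ 0) := by simp
      rw [if_pos h1mem, map_one, map_one, one_mul]
      have hneg : ∑ v ∈ Finset.univ.filter (fun v : Fs => v ≠ 0), -χ (em v) = 0 := by
        rw [Finset.sum_neg_distrib, hSigma, neg_zero]
      rw [hneg, add_zero]
    have hGs0 : Gs ≠ 0 := fun h => hcard0 (by rw [← hprod, h, zero_mul])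
    rw [hfact]
    have : SA = Gbar * G / (Fintype.card Fs : ℂ) := by
      field_simp at hmain ⊢
      linear_combination hmain
    rw [this]
    field_simp
    linear_combination SB * G * hprod
  · -- trivial case
    intro htriv
    have hGbar1 : Gbar = -1 := by
      rw [hGbar]
      have : ∀ u ∈ Finset.univ.filter (fun u : Fs => u ≠ 0),
          χ (em u⁻¹) * gmwPsi Fs u = gmwPsi Fs u := by
        intro u hu
        rw [Finset.mem_filter] at hu
        rw [htriv u⁻¹ (inv_ne_zero hu.2), one_mul]
      rw [Finset.sum_congr rfl this]
      exact gmwPsi_sum_ne_zero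
    rw [hfact]
    have : SA = -(G / (Fintype.card Fs : ℂ)) := by
      have := hmain
      rw [hGbar1] at this
      field_simp at this ⊢
      linear_combination this
    rw [this]
    ring
end

section
/- Let q > 2 be a power of two, F_s a subfield, A = {a ∈ F_q : Tr_{q,s}(a) = 1}, and B a difference set in F_s* with |B| = s/2. Then D = {ab : a ∈ A, b ∈ B} is a difference set in the cyclic group F_q* with parameters (q−1, q/2, q/4). -/
open scoped Classical
open Finset

private lemma fiber_card_mul {G H : Type*} [AddCommGroup G] [AddCommGroup H]
    [Fintype G] [Fintype H]
    (f : G →+ H) (hf : Function.Surjective f) (y : H) :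
    (Finset.univ.filter (fun a => f a = y)).card * Fintype.card H = Fintype.card G := by
  classical
  have hfib : ∀ y₁ y₂ : H, (Finset.univ.filter (fun a => f a = y₁)).card =
      (Finset.univ.filter (fun a => f a = y₂)).card := by
    intro y₁ y₂
    obtain ⟨a₁, ha₁⟩ := hf y₁
    obtain ⟨a₂, ha₂⟩ := hf y₂
    apply Finset.card_bij (fun a _ => a + (a₂ - a₁))
    · intro a ha
      simp only [mem_filter, mem_univ, true_and] at ha ⊢
      simp [map_add, map_sub, ha, ha₁, ha₂]
    · intro a ha b hb hab
      exact add_right_cancel hab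
    · intro b hb
      simp only [mem_filter, mem_univ, true_and] at hb
      refine ⟨b - (a₂ - a₁), ?_, by abel⟩
      simp only [mem_filter, mem_univ, true_and, map_sub, hb, ha₁, ha₂]
      abel
  have hsum : (Finset.univ : Finset G).card =
      ∑ z : H, (Finset.univ.filter (fun a => f a = z)).card :=
    Finset.card_eq_sum_card_fiberwise (fun a _ => Finset.mem_univ (f a))
  rw [Finset.card_univ] at hsum
  rw [hsum, Finset.sum_congr rfl (fun z _ => hfib z y)]
  simp [Finset.sum_const, Finset.card_univ, mul_comm]

private lemma card_filter_prod {α β : Type*} (s : Finset α) (t : Finset β)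
    (P : α → β → Prop) [∀ a b, Decidable (P a b)] :
    ((s ×ˢ t).filter (fun p => P p.1 p.2)).card
      = ∑ x ∈ s, (t.filter (fun y => P x y)).card := by
  rw [Finset.card_filter, Finset.sum_product]
  exact Finset.sum_congr rfl fun x _ => (Finset.card_filter _ _).symm

private lemma trace_nondeg (Fs Fq : Type*) [Field Fs] [Field Fq] [Fintype Fs] [Fintype Fq]
    [Algebra Fs Fq] (x : Fq) (h : ∀ a, Algebra.trace Fs Fq (x * a) = 0) : x = 0 := by
  by_contra hx
  obtain ⟨y, hy⟩ := Algebra.trace_surjective Fs Fq 1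
  have hxy := h (x⁻¹ * y)
  rw [← mul_assoc, mul_inv_cancel₀ hx, one_mul, hy] at hxy
  exact one_ne_zero hxy

private noncomputable def jointHom (Fs Fq : Type*) [Field Fs] [Field Fq] [Algebra Fs Fq] (g' : Fq) :
    Fq →+ Fs × Fs where
  toFun a := (Algebra.trace Fs Fq a, Algebra.trace Fs Fq (g' * a))
  map_zero' := by simp
  map_add' x y := by simp [mul_add, map_add, Prod.ext_iff]

private lemma joint_surj (Fs Fq : Type*) [Field Fs] [Field Fq] [Fintype Fs] [Fintype Fq]
    [Algebra Fs Fq] (g' : Fq) (hg' : ∀ c : Fs, g' ≠ algebraMap Fs Fq c) :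
    Function.Surjective (jointHom Fs Fq g') := by
  classical
  set T := Algebra.trace Fs Fq with hT
  obtain ⟨a₀, ha₀⟩ := Algebra.trace_surjective Fs Fq (1 : Fs)
  have hk : ∃ k : Fq, T k = 0 ∧ T (g' * k) ≠ 0 := by
    by_contra hcon
    push_neg at hcon
    set w := T (g' * a₀) with hw
    have hprop : ∀ a : Fq, T (g' * a) = T a * w := by
      intro a
      have h1 : T (a - T a • a₀) = 0 := by
        rw [map_sub, map_smul, ha₀, smul_eq_mul, mul_one, sub_self]
      have h2 := hcon _ h1
      rw [mul_sub, mul_smul_comm, map_sub, map_smul, smul_eq_mul] at h2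
      exact sub_eq_zero.mp h2
    have hgw : g' = algebraMap Fs Fq w := by
      have hz : ∀ a, T ((g' - algebraMap Fs Fq w) * a) = 0 := by
        intro a
        rw [sub_mul, map_sub, hprop, ← Algebra.smul_def, map_smul, smul_eq_mul]
        ring
      have h0 := trace_nondeg Fs Fq _ hz
      rwa [sub_eq_zero] at h0
    exact hg' w hgw
  obtain ⟨k, hk0, hkc⟩ := hk
  rintro ⟨u, v⟩
  set c := T (g' * k) with hc
  set w := T (g' * a₀) with hw
  refine ⟨u • a₀ + ((v - u * w) * c⁻¹) • k, ?_⟩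
  simp only [jointHom, AddMonoidHom.coe_mk, ZeroHom.coe_mk]
  have h1 : T (u • a₀ + ((v - u * w) * c⁻¹) • k) = u := by
    rw [map_add, map_smul, map_smul, ha₀, hk0, smul_eq_mul, smul_eq_mul]
    ring
  have h2 : T (g' * (u • a₀ + ((v - u * w) * c⁻¹) • k)) = v := by
    rw [mul_add, mul_smul_comm, mul_smul_comm, map_add, map_smul, map_smul,
      smul_eq_mul, smul_eq_mul, ← hw, ← hc]
    field_simp
    ring
  exact Prod.ext h1 h2

/-- If `q > 2` is a power of two, `A = {a ∈ F_q : Tr_{q,s}(a) = 1}` and `B` is a difference set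
in `F_s*` with `|B| = s/2`, then `D = {ab : a ∈ A, b ∈ B}` is a difference set in the cyclic
group `F_q*` with parameters `(q-1, q/2, q/4)`. -/
theorem gmw_is_difference_set (Fs Fq : Type*) [Field Fs] [Field Fq] [Fintype Fs] [Fintype Fq]
    [Algebra Fs Fq] [CharP Fq 2]
    (hq : 2 < Fintype.card Fq)
    (B : Finset Fs) (hB0 : (0 : Fs) ∉ B) (hBcard : 2 * B.card = Fintype.card Fs)
    (hBdiff : ∀ g : Fs, g ≠ 0 → g ≠ 1 →
      4 * ((B ×ˢ B).filter (fun q => q.1 = g * q.2)).card = Fintype.card Fs)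
    (A : Finset Fq) (hA : ∀ a : Fq, a ∈ A ↔ Algebra.trace Fs Fq a = 1)
    (D : Finset Fq) (hD : ∀ d : Fq, d ∈ D ↔ ∃ a ∈ A, ∃ b ∈ B, d = a * algebraMap Fs Fq b) :
    (0 : Fq) ∉ D ∧ 2 * D.card = Fintype.card Fq ∧
    ∀ g : Fq, g ≠ 0 → g ≠ 1 →
      4 * ((D ×ˢ D).filter (fun q => q.1 = g * q.2)).card = Fintype.card Fq := by
  classical
  have hφinj : Function.Injective (algebraMap Fs Fq) := (algebraMap Fs Fq).injective
  have hBne : ∀ b ∈ B, b ≠ 0 := fun b hb h => hB0 (h ▸ hb)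
  have hφb : ∀ b ∈ B, algebraMap Fs Fq b ≠ 0 := fun b hb h =>
    hBne b hb (hφinj (h.trans (map_zero _).symm))
  -- key injectivity of (a, b) ↦ a * φ b on A × B
  have hinj : ∀ p ∈ A ×ˢ B, ∀ q ∈ A ×ˢ B,
      p.1 * algebraMap Fs Fq p.2 = q.1 * algebraMap Fs Fq q.2 → p = q := by
    rintro ⟨a₁, b₁⟩ hp ⟨a₂, b₂⟩ hq h
    rw [Finset.mem_product] at hp hq
    obtain ⟨ha₁, hb₁⟩ := hp
    obtain ⟨ha₂, hb₂⟩ := hq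
    have hb₁0 : algebraMap Fs Fq b₁ ≠ 0 := hφb _ hb₁
    have hb₂0 : algebraMap Fs Fq b₂ ≠ 0 := hφb _ hb₂
    have hb₁0' : b₁ ≠ 0 := hBne _ hb₁
    have key : a₁ = (b₂ * b₁⁻¹) • a₂ := by
      rw [Algebra.smul_def, map_mul, map_inv₀]
      field_simp
      linear_combination h
    have hbb1 : b₂ * b₁⁻¹ = 1 := by
      have ht := (hA a₁).mp ha₁
      rw [key, map_smul, smul_eq_mul, (hA a₂).mp ha₂, mul_one] at ht
      exact ht
    have hbb : b₂ = b₁ := by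
      field_simp at hbb1
      exact hbb1
    have haa : a₁ = a₂ := by
      rw [hbb1, one_smul] at key
      exact key
    simp [haa, hbb]
  have hDim : D = (A ×ˢ B).image (fun p => p.1 * algebraMap Fs Fq p.2) := by
    ext d
    simp only [Finset.mem_image, Finset.mem_product, hD]
    constructor
    · rintro ⟨a, ha, b, hb, rfl⟩
      exact ⟨(a, b), ⟨ha, hb⟩, rfl⟩
    · rintro ⟨⟨a, b⟩, ⟨ha, hb⟩, rfl⟩
      exact ⟨a, ha, b, hb, rfl⟩
  have hinjOn : Set.InjOn (fun p : Fq × Fs => p.1 * algebraMap Fs Fq p.2) ↑(A ×ˢ B) :=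
    fun p hp q hq h => hinj p (Finset.mem_coe.mp hp) q (Finset.mem_coe.mp hq) h
  have hDcard : D.card = A.card * B.card := by
    rw [hDim, Finset.card_image_of_injOn hinjOn, Finset.card_product]
  have hAfilter : A = Finset.univ.filter
      (fun a => (Algebra.trace Fs Fq).toAddMonoidHom a = 1) := by
    ext a
    simp [hA a, Finset.mem_filter]
    exact (Finset.mem_filter.trans (by simp)).symm
  have hAcard : A.card * Fintype.card Fs = Fintype.card Fq := by
    rw [hAfilter]
    exact fiber_card_mul (Algebra.trace Fs Fq).toAddMonoidHom (Algebra.trace_surjective Fs Fq) 1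
  refine ⟨?_, ?_, ?_⟩
  · -- 0 ∉ D
    intro h0
    obtain ⟨a, ha, b, hb, hab⟩ := (hD 0).mp h0
    have ha0 : a = 0 := by
      rcases mul_eq_zero.mp hab.symm with h | h
      · exact h
      · exact absurd h (hφb b hb)
    have ht := (hA a).mp ha
    rw [ha0, map_zero] at ht
    exact zero_ne_one ht
  · -- cardinality of D
    rw [hDcard]
    calc 2 * (A.card * B.card) = A.card * (2 * B.card) := by ring
    _ = A.card * Fintype.card Fs := by rw [hBcard]
    _ = Fintype.card Fq := hAcard
  · intro g hg0 hg1
    have key : (((B ×ˢ B) ×ˢ (A ×ˢ A)).filter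
          (fun p => p.2.1 * algebraMap Fs Fq p.1.1 = g * (p.2.2 * algebraMap Fs Fq p.1.2))).card
        = ((D ×ˢ D).filter (fun q => q.1 = g * q.2)).card := by
      apply Finset.card_bij
        (fun p _ => (p.2.1 * algebraMap Fs Fq p.1.1, p.2.2 * algebraMap Fs Fq p.1.2))
      · rintro ⟨⟨b₁, b₂⟩, ⟨a₁, a₂⟩⟩ hp
        simp only [Finset.mem_filter, Finset.mem_product] at hp ⊢
        obtain ⟨⟨⟨hb₁, hb₂⟩, ⟨ha₁, ha₂⟩⟩, hrel⟩ := hp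
        exact ⟨⟨(hD _).mpr ⟨a₁, ha₁, b₁, hb₁, rfl⟩, (hD _).mpr ⟨a₂, ha₂, b₂, hb₂, rfl⟩⟩, hrel⟩
      · rintro ⟨⟨b₁, b₂⟩, ⟨a₁, a₂⟩⟩ hp ⟨⟨b₁', b₂'⟩, ⟨a₁', a₂'⟩⟩ hq h
        simp only [Finset.mem_filter, Finset.mem_product] at hp hq
        obtain ⟨⟨⟨hb₁, hb₂⟩, ⟨ha₁, ha₂⟩⟩, -⟩ := hp
        obtain ⟨⟨⟨hb₁', hb₂'⟩, ⟨ha₁', ha₂'⟩⟩, -⟩ := hq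
        rw [Prod.mk.injEq] at h
        have e1 := hinj (a₁, b₁) (Finset.mem_product.mpr ⟨ha₁, hb₁⟩) (a₁', b₁')
          (Finset.mem_product.mpr ⟨ha₁', hb₁'⟩) h.1
        have e2 := hinj (a₂, b₂) (Finset.mem_product.mpr ⟨ha₂, hb₂⟩) (a₂', b₂')
          (Finset.mem_product.mpr ⟨ha₂', hb₂'⟩) h.2
        rw [Prod.mk.injEq] at e1 e2
        simp [e1.1, e1.2, e2.1, e2.2]
      · rintro ⟨d₁, d₂⟩ hd
        simp only [Finset.mem_filter, Finset.mem_product] at hd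
        obtain ⟨⟨hd₁, hd₂⟩, hrel⟩ := hd
        obtain ⟨a₁, ha₁, b₁, hb₁, rfl⟩ := (hD d₁).mp hd₁
        obtain ⟨a₂, ha₂, b₂, hb₂, rfl⟩ := (hD d₂).mp hd₂
        refine ⟨((b₁, b₂), (a₁, a₂)), ?_, rfl⟩
        simp only [Finset.mem_filter, Finset.mem_product]
        exact ⟨⟨⟨hb₁, hb₂⟩, ⟨ha₁, ha₂⟩⟩, hrel⟩
    have hsum := card_filter_prod (B ×ˢ B) (A ×ˢ A)
      (fun bb aa => aa.1 * algebraMap Fs Fq bb.1 = g * (aa.2 * algebraMap Fs Fq bb.2))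
    have hinner : ∀ b₁ ∈ B, ∀ b₂ ∈ B,
        ((A ×ˢ A).filter (fun aa : Fq × Fq =>
            aa.1 * algebraMap Fs Fq b₁ = g * (aa.2 * algebraMap Fs Fq b₂))).card
        = (Finset.univ.filter (fun a : Fq => Algebra.trace Fs Fq a = 1 ∧
            Algebra.trace Fs Fq (g * algebraMap Fs Fq b₂ * (algebraMap Fs Fq b₁)⁻¹ * a)
            = 1)).card := by
      intro b₁ hb₁ b₂ hb₂
      have hb₁0 : algebraMap Fs Fq b₁ ≠ 0 := hφb _ hb₁
      symm
      apply Finset.card_bij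
        (fun a _ => ((g * algebraMap Fs Fq b₂ * (algebraMap Fs Fq b₁)⁻¹ * a), a))
      · intro a ha
        simp only [Finset.mem_filter, Finset.mem_univ, true_and] at ha
        simp only [Finset.mem_filter, Finset.mem_product]
        refine ⟨⟨(hA _).mpr ha.2, (hA _).mpr ha.1⟩, ?_⟩
        field_simp
      · intro a _ a' _ h
        exact congrArg Prod.snd h
      · intro aa haa
        simp only [Finset.mem_filter, Finset.mem_product] at haa
        obtain ⟨⟨ha₁, ha₂⟩, hrel⟩ := haa
        have heq : g * algebraMap Fs Fq b₂ * (algebraMap Fs Fq b₁)⁻¹ * aa.2 = aa.1 := by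
          field_simp
          linear_combination -hrel
        refine ⟨aa.2, ?_, ?_⟩
        · simp only [Finset.mem_filter, Finset.mem_univ, true_and]
          refine ⟨(hA _).mp ha₂, ?_⟩
          rw [heq]
          exact (hA _).mp ha₁
        · rw [heq]
    have hstep : ((D ×ˢ D).filter (fun q => q.1 = g * q.2)).card
        = ∑ bb ∈ B ×ˢ B, (Finset.univ.filter (fun a : Fq => Algebra.trace Fs Fq a = 1 ∧
            Algebra.trace Fs Fq (g * algebraMap Fs Fq bb.2 * (algebraMap Fs Fq bb.1)⁻¹ * a)
            = 1)).card := by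
      rw [← key, hsum]
      exact Finset.sum_congr rfl fun bb hbb =>
        hinner bb.1 (Finset.mem_product.mp hbb).1 bb.2 (Finset.mem_product.mp hbb).2
    rw [hstep]
    by_cases hgr : ∃ c : Fs, g = algebraMap Fs Fq c
    · obtain ⟨c, rfl⟩ := hgr
      have hc0 : c ≠ 0 := fun h => hg0 (by rw [h, map_zero])
      have hc1 : c ≠ 1 := fun h => hg1 (by rw [h, map_one])
      have hM : ∀ b₁ ∈ B, ∀ b₂ ∈ B,
          (Finset.univ.filter (fun a : Fq => Algebra.trace Fs Fq a = 1 ∧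
            Algebra.trace Fs Fq (algebraMap Fs Fq c * algebraMap Fs Fq b₂ *
              (algebraMap Fs Fq b₁)⁻¹ * a) = 1)).card
          = if b₁ = c * b₂ then A.card else 0 := by
        intro b₁ hb₁ b₂ hb₂
        have hb₁0 : b₁ ≠ 0 := hBne _ hb₁
        have hb₂0 : b₂ ≠ 0 := hBne _ hb₂
        have htr : ∀ a : Fq, Algebra.trace Fs Fq (algebraMap Fs Fq c * algebraMap Fs Fq b₂ *
            (algebraMap Fs Fq b₁)⁻¹ * a) = (c * b₂ * b₁⁻¹) * Algebra.trace Fs Fq a := by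
          intro a
          rw [← map_inv₀, ← map_mul, ← map_mul, ← Algebra.smul_def, map_smul, smul_eq_mul]
        by_cases hcb : b₁ = c * b₂
        · rw [if_pos hcb]
          have hc' : c * b₂ * b₁⁻¹ = 1 := by
            rw [hcb]
            field_simp
          have hflt : (Finset.univ.filter (fun a : Fq => Algebra.trace Fs Fq a = 1 ∧
              Algebra.trace Fs Fq (algebraMap Fs Fq c * algebraMap Fs Fq b₂ *
                (algebraMap Fs Fq b₁)⁻¹ * a) = 1)) = A := by
            ext a
            simp only [Finset.mem_filter, Finset.mem_univ, true_and, htr a, hc', one_mul]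
            rw [hA a]
            exact and_self_iff
          rw [hflt]
        · rw [if_neg hcb, Finset.card_eq_zero]
          apply Finset.filter_false_of_mem
          rintro a - ⟨h1, h2⟩
          rw [htr a, h1, mul_one] at h2
          apply hcb
          field_simp at h2
          exact h2.symm
      have hMall : ∀ bb ∈ B ×ˢ B,
          (Finset.univ.filter (fun a : Fq => Algebra.trace Fs Fq a = 1 ∧
            Algebra.trace Fs Fq (algebraMap Fs Fq c * algebraMap Fs Fq bb.2 *
              (algebraMap Fs Fq bb.1)⁻¹ * a) = 1)).card
          = if bb.1 = c * bb.2 then A.card else 0 := fun bb hbb =>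
        hM bb.1 (Finset.mem_product.mp hbb).1 bb.2 (Finset.mem_product.mp hbb).2
      rw [Finset.sum_congr rfl hMall, ← Finset.sum_filter, Finset.sum_const, smul_eq_mul,
        ← mul_assoc, hBdiff c hc0 hc1, mul_comm]
      exact hAcard
    · push_neg at hgr
      have hnr : ∀ b₁ ∈ B, ∀ b₂ ∈ B, ∀ c : Fs,
          g * algebraMap Fs Fq b₂ * (algebraMap Fs Fq b₁)⁻¹ ≠ algebraMap Fs Fq c := by
        intro b₁ hb₁ b₂ hb₂ c h
        have hb₁0 : algebraMap Fs Fq b₁ ≠ 0 := hφb _ hb₁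
        have hb₂0 : algebraMap Fs Fq b₂ ≠ 0 := hφb _ hb₂
        apply hgr (c * b₁ * b₂⁻¹)
        rw [map_mul, map_mul, map_inv₀]
        field_simp at h ⊢
        linear_combination h
      have hMn : ∀ bb ∈ B ×ˢ B,
          (Finset.univ.filter (fun a : Fq => Algebra.trace Fs Fq a = 1 ∧
            Algebra.trace Fs Fq (g * algebraMap Fs Fq bb.2 * (algebraMap Fs Fq bb.1)⁻¹ * a)
            = 1)).card * (Fintype.card Fs * Fintype.card Fs) = Fintype.card Fq := by
        intro bb hbb
        obtain ⟨hb₁, hb₂⟩ := Finset.mem_product.mp hbb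
        set g' := g * algebraMap Fs Fq bb.2 * (algebraMap Fs Fq bb.1)⁻¹ with hg'
        have hfib := fiber_card_mul (jointHom Fs Fq g')
          (joint_surj Fs Fq g' (hnr bb.1 hb₁ bb.2 hb₂)) (1, 1)
        rw [Fintype.card_prod] at hfib
        rw [← hfib]
        congr 1
        apply Finset.card_bij (fun a _ => a)
        · intro a ha
          simp only [Finset.mem_filter, Finset.mem_univ, true_and] at ha ⊢
          simpa [jointHom, Prod.ext_iff] using ha
        · intro a _ a' _ h
          exact h
        · intro a ha
          refine ⟨a, ?_, rfl⟩
          simp only [Finset.mem_filter, Finset.mem_univ, true_and] at ha ⊢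
          simpa [jointHom, Prod.ext_iff] using ha
      have hcardB : 0 < B.card := by
        have := Fintype.card_pos (α := Fs)
        omega
      have htot : (∑ bb ∈ B ×ˢ B,
          (Finset.univ.filter (fun a : Fq => Algebra.trace Fs Fq a = 1 ∧
            Algebra.trace Fs Fq (g * algebraMap Fs Fq bb.2 * (algebraMap Fs Fq bb.1)⁻¹ * a)
            = 1)).card) * (Fintype.card Fs * Fintype.card Fs)
          = (B.card * B.card) * Fintype.card Fq := by
        rw [Finset.sum_mul, Finset.sum_congr rfl hMn, Finset.sum_const, Finset.card_product,
          smul_eq_mul]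
      have hs2 : Fintype.card Fs * Fintype.card Fs = 4 * (B.card * B.card) := by
        rw [← hBcard]
        ring
      have hB2 : 0 < B.card * B.card := Nat.mul_pos hcardB hcardB
      apply Nat.eq_of_mul_eq_mul_right hB2
      rw [hs2] at htot
      calc (4 * ∑ bb ∈ B ×ˢ B,
          (Finset.univ.filter (fun a : Fq => Algebra.trace Fs Fq a = 1 ∧
            Algebra.trace Fs Fq (g * algebraMap Fs Fq bb.2 * (algebraMap Fs Fq bb.1)⁻¹ * a)
            = 1)).card) * (B.card * B.card)
          = (∑ bb ∈ B ×ˢ B,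
          (Finset.univ.filter (fun a : Fq => Algebra.trace Fs Fq a = 1 ∧
            Algebra.trace Fs Fq (g * algebraMap Fs Fq bb.2 * (algebraMap Fs Fq bb.1)⁻¹ * a)
            = 1)).card) * (4 * (B.card * B.card)) := by ring
        _ = (B.card * B.card) * Fintype.card Fq := htot
        _ = Fintype.card Fq * (B.card * B.card) := mul_comm _ _
end

section
/- Let q be an odd prime power, η the quadratic character of F_q, θ a generator of F_q*, ξ the multiplicative character with ξ(θ) = e^{2πi/(q−1)}, and f(z) = z^{(q−1)/2} + ∑_{j=0}^{q−2} η(θ^j + 1) z^j. Then f(1) = 0, and for every integer k not divisible by q−1, f(e^{2πik/(q−1)}) = (−1)^k (1 + J(η, ξ^k)), where J denotes the Jacobi sum. -/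
open scoped Classical

/-- The extension of a multiplicative character to `0`, with the convention `χ(0) = 1` for the
trivial character and `χ(0) = 0` otherwise. -/
noncomputable def mext {F : Type*} [Field F] (χ : MulChar F ℂ) : F → ℂ :=
  fun x => if x = 0 then (if χ = 1 then 1 else 0) else χ x

/-- The Jacobi sum `J(ψ, χ) = ∑_{y ∈ F_q} ψ(y) χ(1-y)`. -/
noncomputable def jacSum {F : Type*} [Field F] [Fintype F] (ψ χ : MulChar F ℂ) : ℂ :=
  ∑ y : F, mext ψ y * mext χ (1 - y)


lemma mulChar_zpow_apply {F : Type*} [Field F] (ξ : MulChar F ℂ) (k : ℤ) (x : F) (hx : x ≠ 0) :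
    (ξ ^ k) x = ξ x ^ k := by
  cases k with
  | ofNat n =>
    rcases Nat.eq_zero_or_pos n with h | h
    · subst h
      simp [MulChar.one_apply (isUnit_iff_ne_zero.mpr hx)]
    · rw [Int.ofNat_eq_coe, zpow_natCast, zpow_natCast, MulChar.pow_apply' _ (by omega)]
  | negSucc n =>
    rw [zpow_negSucc, zpow_negSucc, MulChar.inv_apply_eq_inv',
      MulChar.pow_apply' _ (Nat.succ_ne_zero n)]

/-- For `q` odd, `η` the quadratic character, `θ` a generator of `F_q*`, `ξ` the character with
`ξ(θ) = e^{2πi/(q-1)}` and `f(z) = z^{(q-1)/2} + ∑_{j=0}^{q-2} η(θ^j+1) z^j`, we have `f(1) = 0`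
and `f(e^{2πik/(q-1)}) = (-1)^k (1 + J(η, ξ^k))` for every integer `k` not divisible by `q-1`. -/
theorem sidelnikov_poly_values (F : Type*) [Field F] [Fintype F]
    (hodd : Odd (Fintype.card F))
    (θ : F) (hθ : ∀ x : F, x ≠ 0 → ∃ j : ℕ, θ ^ j = x)
    (η : MulChar F ℂ) (hη2 : η ^ 2 = 1) (hη1 : η ≠ 1)
    (ξ : MulChar F ℂ)
    (hξ : ξ θ = Complex.exp (2 * Real.pi * Complex.I / ((Fintype.card F : ℂ) - 1)))
    (f : ℂ → ℂ)
    (hf : ∀ z : ℂ, f z = z ^ ((Fintype.card F - 1) / 2) +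
      ∑ j ∈ Finset.range (Fintype.card F - 1), η (θ ^ j + 1) * z ^ j) :
    f 1 = 0 ∧
    ∀ k : ℤ, ¬ ((Fintype.card F : ℤ) - 1 ∣ k) →
      f (Complex.exp (2 * Real.pi * Complex.I * (k : ℂ) / ((Fintype.card F : ℂ) - 1)))
        = (-1 : ℂ) ^ k * (1 + jacSum η (ξ ^ k)) := by
  set q := Fintype.card F with hq
  have hq2 : 1 < q := Fintype.one_lt_card
  have hq3 : 3 ≤ q := by obtain ⟨m, hm⟩ := hodd; omega
  -- θ ≠ 0
  have hθ0 : θ ≠ 0 := by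
    have hcard : ¬ (Finset.univ : Finset F) ⊆ ({0, 1} : Finset F) := by
      intro hsub
      have h1 := Finset.card_le_card hsub
      have h2 : ({0, 1} : Finset F).card ≤ 2 :=
        (Finset.card_insert_le _ _).trans (by simp)
      rw [Finset.card_univ] at h1
      omega
    obtain ⟨x, -, hx⟩ := Finset.not_subset.mp hcard
    simp only [Finset.mem_insert, Finset.mem_singleton, not_or] at hx
    obtain ⟨j, hj⟩ := hθ x hx.1
    intro h0
    rw [h0] at hj
    rcases Nat.eq_zero_or_pos j with h | h
    · rw [h, pow_zero] at hj; exact hx.2 hj.symm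
    · rw [zero_pow (by omega)] at hj; exact hx.1 hj.symm
  set u : Fˣ := Units.mk0 θ hθ0 with hu
  have huv : (u : F) = θ := rfl
  have hupow : ∀ n : ℕ, ((u ^ n : Fˣ) : F) = θ ^ n := fun n => by
    rw [Units.val_pow_eq_pow_val, huv]
  have hgen : ∀ v : Fˣ, v ∈ Subgroup.zpowers u := by
    intro v
    obtain ⟨j, hj⟩ := hθ (v : F) v.ne_zero
    refine ⟨(j : ℤ), ?_⟩
    show u ^ (j : ℤ) = v
    rw [zpow_natCast]
    exact Units.ext (by rw [hupow]; exact hj)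
  have hord : orderOf u = q - 1 := by
    rw [orderOf_eq_card_of_forall_mem_zpowers hgen, Nat.card_units,
      Nat.card_eq_fintype_card]
  have hsum : ∀ g : F → ℂ, ∑ j ∈ Finset.range (q - 1), g (θ ^ j)
      = ∑ x ∈ Finset.univ.erase (0 : F), g x := by
    intro g
    apply Finset.sum_bij (fun j _ => θ ^ j)
    · intro a _
      exact Finset.mem_erase.mpr ⟨pow_ne_zero _ hθ0, Finset.mem_univ _⟩
    · intro a ha b hb hab
      have h1 : u ^ a = u ^ b := Units.ext (by rw [hupow, hupow]; exact hab)
      have h2 := pow_eq_pow_iff_modEq.mp h1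
      rw [hord] at h2
      have ha' := Finset.mem_range.mp ha
      have hb' := Finset.mem_range.mp hb
      calc a = a % (q - 1) := (Nat.mod_eq_of_lt ha').symm
        _ = b % (q - 1) := h2
        _ = b := Nat.mod_eq_of_lt hb'
    · intro x hx
      obtain ⟨j, hj⟩ := hθ x (Finset.mem_erase.mp hx).1
      refine ⟨j % (q - 1), Finset.mem_range.mpr (Nat.mod_lt _ (by omega)), ?_⟩
      have h1 : u ^ (j % orderOf u) = u ^ j := pow_mod_orderOf u j
      rw [hord] at h1
      calc θ ^ (j % (q - 1)) = ((u ^ (j % (q - 1)) : Fˣ) : F) := (hupow _).symm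
        _ = ((u ^ j : Fˣ) : F) := by rw [h1]
        _ = θ ^ j := hupow j
        _ = x := hj
    · intros; rfl
  have hη0 : η (0 : F) = 0 := η.map_nonunit (by simp)
  -- Part 1
  have part1 : f 1 = 0 := by
    rw [hf]
    simp only [one_pow, mul_one]
    rw [hsum (fun x => η (x + 1)), Finset.sum_erase_eq_sub (Finset.mem_univ (0 : F))]
    have hshift : ∑ x : F, η (x + 1) = ∑ x : F, η x :=
      Fintype.sum_equiv (Equiv.addRight (1 : F)) _ _ (fun x => rfl)
    rw [hshift, MulChar.sum_eq_zero_of_ne_one hη1]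
    simp
  refine ⟨part1, ?_⟩
  intro k hk
  have hc1 : ((q : ℂ) - 1) ≠ 0 := by
    have h : ((q : ℂ) - 1) = ((q - 1 : ℕ) : ℂ) := by
      push_cast [Nat.cast_sub (by omega : 1 ≤ q)]; ring
    rw [h]
    exact_mod_cast (by omega : q - 1 ≠ 0)
  set m : ℕ := (q - 1) / 2 with hm
  have h2m : 2 * m = q - 1 := by
    have : Even (q - 1) := Nat.Odd.sub_odd hodd odd_one
    obtain ⟨r, hr⟩ := this
    omega
  have hmc : (m : ℂ) * 2 = (q : ℂ) - 1 := by
    have h : ((2 * m : ℕ) : ℂ) = ((q - 1 : ℕ) : ℂ) := by rw [h2m]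
    push_cast [Nat.cast_sub (by omega : 1 ≤ q)] at h
    linear_combination h
  set c : ℂ := 2 * Real.pi * Complex.I / ((q : ℂ) - 1) with hc
  set ω : ℂ := Complex.exp (2 * Real.pi * Complex.I * (k : ℂ) / ((q : ℂ) - 1)) with hω
  set χ : MulChar F ℂ := ξ ^ k with hχ
  have hξθj : ∀ j : ℕ, ξ (θ ^ j) = Complex.exp ((j : ℂ) * c) := by
    intro j
    rw [map_pow, hξ, ← Complex.exp_nat_mul]
  have hχθj : ∀ j : ℕ, χ (θ ^ j) = Complex.exp ((k : ℂ) * ((j : ℂ) * c)) := by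
    intro j
    rw [hχ, mulChar_zpow_apply _ _ _ (pow_ne_zero _ hθ0), hξθj, ← Complex.exp_int_mul]
  have hωj : ∀ j : ℕ, ω ^ j = χ (θ ^ j) := by
    intro j
    rw [hχθj, hω, ← Complex.exp_nat_mul]
    congr 1
    rw [hc]
    ring
  have hmcπ : (m : ℂ) * c = Real.pi * Complex.I := by
    rw [hc]
    field_simp
    linear_combination hmc
  have hωm : ω ^ m = (-1 : ℂ) ^ k := by
    rw [hω, ← Complex.exp_nat_mul, ← Complex.exp_pi_mul_I, ← Complex.exp_int_mul]
    congr 1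
    rw [← hmcπ, hc]
    ring
  have hχ0 : χ (0 : F) = 0 := χ.map_nonunit (by simp)
  -- χ ≠ 1
  have hχ1 : χ ≠ 1 := by
    intro h
    have h1 : χ θ = 1 := by rw [h, MulChar.one_apply (isUnit_iff_ne_zero.mpr hθ0)]
    have h3 := hχθj 1
    rw [pow_one] at h3
    rw [h3] at h1
    simp only [Nat.cast_one, one_mul] at h1
    rw [Complex.exp_eq_one_iff] at h1
    obtain ⟨n, hn⟩ := h1
    apply hk
    refine ⟨n, ?_⟩
    have h2pi : (2 : ℂ) * Real.pi * Complex.I ≠ 0 := by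
      simp [Real.pi_ne_zero, Complex.I_ne_zero]
    have h4 : (k : ℂ) * (2 * Real.pi * Complex.I)
        = ((q : ℂ) - 1) * (n : ℂ) * (2 * Real.pi * Complex.I) := by
      rw [hc] at hn
      field_simp at hn
      linear_combination (2 * (Real.pi : ℂ) * Complex.I) * hn
    have h5 : (k : ℂ) = ((q : ℂ) - 1) * (n : ℂ) := mul_right_cancel₀ h2pi h4
    have h6 : (k : ℂ) = (((q : ℤ) - 1) * n : ℤ) := by push_cast; linear_combination h5
    exact_mod_cast h6
  -- χ(-1) = (-1)^k
  have hθm : θ ^ m = -1 := by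
    have e1 : θ ^ m * θ ^ m = 1 := by
      rw [← pow_add]
      have hmm : m + m = q - 1 := by omega
      rw [hmm]
      have h1 : u ^ (q - 1) = 1 := by rw [← hord]; exact pow_orderOf_eq_one u
      calc θ ^ (q - 1) = ((u ^ (q - 1) : Fˣ) : F) := (hupow _).symm
        _ = 1 := by rw [h1, Units.val_one]
    have e2 : θ ^ m ≠ 1 := by
      intro h
      have h3 : u ^ m = 1 := Units.ext (by rw [hupow, h, Units.val_one])
      have h4 := orderOf_dvd_of_pow_eq_one h3
      rw [hord] at h4
      have := Nat.le_of_dvd (by omega) h4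
      omega
    rcases mul_self_eq_one_iff.mp e1 with h | h
    · exact absurd h e2
    · exact h
  have hχneg1 : χ (-1 : F) = (-1 : ℂ) ^ k := by
    calc χ (-1 : F) = χ (θ ^ m) := by rw [hθm]
      _ = Complex.exp ((k : ℂ) * ((m : ℂ) * c)) := hχθj m
      _ = (-1 : ℂ) ^ k := by
          rw [← Complex.exp_pi_mul_I, ← Complex.exp_int_mul, hmcπ]
  have hχneg : ∀ y : F, χ (y - 1) = (-1 : ℂ) ^ k * χ (1 - y) := by
    intro y
    have h1 : (y - 1 : F) = (-1) * (1 - y) := by ring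
    rw [h1, map_mul, hχneg1]
  -- mext identifications
  have hmextη : ∀ y : F, mext η y = η y := by
    intro y
    unfold mext
    by_cases h : y = 0
    · subst h; rw [if_pos rfl, if_neg hη1, hη0]
    · rw [if_neg h]
  have hmextχ : ∀ y : F, mext χ y = χ y := by
    intro y
    unfold mext
    by_cases h : y = 0
    · subst h; rw [if_pos rfl, if_neg hχ1, hχ0]
    · rw [if_neg h]
  have hjac : jacSum η χ = ∑ y : F, η y * χ (1 - y) := by
    unfold jacSum
    exact Finset.sum_congr rfl (fun y _ => by rw [hmextη, hmextχ])
  have hshift : ∑ x : F, η (x + 1) * χ x = ∑ y : F, η y * χ (y - 1) :=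
    (Fintype.sum_equiv (Equiv.subRight (1 : F)) (fun y => η y * χ (y - 1))
      (fun x => η (x + 1) * χ x) (fun y => by simp)).symm
  have hmain : ∑ j ∈ Finset.range (q - 1), η (θ ^ j + 1) * ω ^ j
      = (-1 : ℂ) ^ k * jacSum η χ := by
    calc ∑ j ∈ Finset.range (q - 1), η (θ ^ j + 1) * ω ^ j
        = ∑ j ∈ Finset.range (q - 1), η (θ ^ j + 1) * χ (θ ^ j) :=
          Finset.sum_congr rfl (fun j _ => by rw [hωj])
      _ = ∑ x ∈ Finset.univ.erase (0 : F), η (x + 1) * χ x :=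
          hsum (fun x => η (x + 1) * χ x)
      _ = (∑ x : F, η (x + 1) * χ x) - η (0 + 1) * χ 0 :=
          Finset.sum_erase_eq_sub (Finset.mem_univ _)
      _ = ∑ x : F, η (x + 1) * χ x := by rw [hχ0]; ring
      _ = ∑ y : F, η y * χ (y - 1) := hshift
      _ = ∑ y : F, η y * ((-1 : ℂ) ^ k * χ (1 - y)) :=
          Finset.sum_congr rfl (fun y _ => by rw [hχneg])
      _ = (-1 : ℂ) ^ k * ∑ y : F, η y * χ (1 - y) := by
          rw [Finset.mul_sum]
          exact Finset.sum_congr rfl (fun y _ => by ring)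
      _ = (-1 : ℂ) ^ k * jacSum η χ := by rw [hjac]
  rw [hf, hmain, hωm]
  ring
end

section
/- Let m be an even positive integer, p a prime with p ≡ 1 (mod m), ω a primitive root mod p, and C_s = ω^s·{m-th powers in F_p*}. Let S ⊆ {0,...,m−1} with |S| = m/2, D = ∪_{s∈S} C_s, and f(z) = ∑_{j=0}^{p−1} 𝟙_D(j) z^j where 𝟙_D(j) = 1 if j ∈ D and −1 otherwise. Let χ be a multiplicative character of F_p of order m. Then for every integer k, f(e^{2πik/p}) = (2/m) ∑_{j=1}^{m−1} G(χ^j) · conj(χ^j(k)) · ∑_{s∈S} conj(χ^j(ω^s)) − 1. -/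
open scoped Classical

/-- The additive character `y ↦ e^{2πiy/p}` of `F_p = ZMod p`. -/
noncomputable def eP (p : ℕ) (y : ZMod p) : ℂ :=
  Complex.exp (2 * Real.pi * Complex.I * (y.val : ℂ) / p)

/-- The Gauss sum `G(χ) = ∑_{y ∈ F_p*} χ(y) e^{2πiy/p}`. -/
noncomputable def gaussP (p : ℕ) [NeZero p] (χ : MulChar (ZMod p) ℂ) : ℂ :=
  ∑ y ∈ Finset.univ.filter (fun y : ZMod p => y ≠ 0), χ y * eP p y

open Finset

open Finset

noncomputable def zetaP (p : ℕ) : ℂ := Complex.exp (2 * Real.pi * Complex.I / p)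

lemma zetaP_ne_zero (p : ℕ) : zetaP p ≠ 0 := Complex.exp_ne_zero _

lemma zetaP_pow_p (p : ℕ) (hp : p ≠ 0) : zetaP p ^ (p : ℤ) = 1 := by
  have hpc : (p : ℂ) ≠ 0 := Nat.cast_ne_zero.mpr hp
  rw [zpow_natCast, zetaP, ← Complex.exp_nat_mul,
    show (p : ℂ) * (2 * Real.pi * Complex.I / p) = 2 * Real.pi * Complex.I by
      field_simp]
  exact Complex.exp_two_pi_mul_I

lemma zetaP_congr (p : ℕ) (hp : p ≠ 0) {a b : ℤ} (h : ((a : ZMod p) = (b : ZMod p))) :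
    zetaP p ^ a = zetaP p ^ b := by
  have hd : ((a - b : ℤ) : ZMod p) = 0 := by push_cast [h]; ring
  obtain ⟨t, ht⟩ := (ZMod.intCast_zmod_eq_zero_iff_dvd _ _).mp hd
  have ha : a = b + (p : ℤ) * t := by omega
  rw [ha, zpow_add₀ (zetaP_ne_zero p), zpow_mul, zetaP_pow_p p hp, one_zpow, mul_one]

lemma eP_eq_zetaP (p : ℕ) (y : ZMod p) : eP p y = zetaP p ^ (y.val : ℤ) := by
  rw [eP, zetaP,
    show (2 * Real.pi * Complex.I * (y.val : ℂ) / p)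
      = (y.val : ℂ) * (2 * Real.pi * Complex.I / p) by ring,
    Complex.exp_nat_mul, zpow_natCast]

lemma real_pow_eq_one {r : ℝ} {n : ℕ} (hr : 0 ≤ r) (hn : n ≠ 0) (h : r ^ n = 1) : r = 1 := by
  rcases lt_trichotomy r 1 with h1 | h1 | h1
  · have := pow_lt_one₀ hr h1 hn; linarith
  · exact h1
  · have := one_lt_pow₀ h1 hn; linarith

lemma conj_mul_self {z : ℂ} {n : ℕ} (hn : n ≠ 0) (h : z ^ n = 1) :
    (starRingEnd ℂ) z * z = 1 := by
  have h2 : Complex.normSq z ^ n = 1 := by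
    have : ((Complex.normSq z : ℝ) : ℂ) ^ n = 1 := by
      rw [← Complex.mul_conj z, mul_pow, ← map_pow, h, map_one, mul_one]
    exact_mod_cast this
  have h3 : Complex.normSq z = 1 := real_pow_eq_one (Complex.normSq_nonneg z) hn h2
  rw [mul_comm, Complex.mul_conj, h3, Complex.ofReal_one]

lemma geom_sum_root {w : ℂ} {n : ℕ} (h : w ^ n = 1) :
    ∑ j ∈ Finset.range n, w ^ j = if w = 1 then (n : ℂ) else 0 := by
  split_ifs with h1
  · simp [h1]
  · rw [geom_sum_eq h1, h, sub_self, zero_div]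

section CharLemmas

variable {m p : ℕ} [Fact p.Prime]

lemma mulchar_pow_apply (χ : MulChar (ZMod p) ℂ) (j : ℕ) {a : ZMod p} (ha : a ≠ 0) :
    (χ ^ j) a = χ a ^ j := by
  have hu : IsUnit a := isUnit_iff_ne_zero.mpr ha
  have := MulChar.pow_apply_coe χ j hu.unit
  simpa [IsUnit.unit_spec] using this

lemma mulchar_one_apply {a : ZMod p} (ha : a ≠ 0) : (1 : MulChar (ZMod p) ℂ) a = 1 := by
  have hu : IsUnit a := isUnit_iff_ne_zero.mpr ha
  have := MulChar.one_apply_coe (R' := ℂ) hu.unit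
  simpa [IsUnit.unit_spec] using this

/-- order of `χ ω` equals order of `χ` when `ω` generates the nonzero elements. -/
lemma orderOf_apply_gen (χ : MulChar (ZMod p) ℂ)
    (ω : ZMod p) (hω : ∀ x : ZMod p, x ≠ 0 → ∃ j : ℕ, ω ^ j = x) (hω0 : ω ≠ 0) :
    orderOf (χ ω) = orderOf χ := by
  symm
  rw [orderOf_eq_orderOf_iff]
  intro n
  constructor
  · intro h
    rw [← mulchar_pow_apply χ n hω0, h, mulchar_one_apply hω0]
  · intro h
    apply MulChar.ext
    intro a
    have ha0 : (a : ZMod p) ≠ 0 := a.ne_zero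
    obtain ⟨j, hj⟩ := hω a ha0
    rw [MulChar.pow_apply_coe, MulChar.one_apply_coe, ← hj, map_pow, ← pow_mul, mul_comm,
      pow_mul, h, one_pow]

lemma pow_eq_pow_dvd {u : ℂ} (hu : u ≠ 0) {a b : ℕ} (h : u ^ a = u ^ b) :
    ((orderOf u : ℤ)) ∣ (a : ℤ) - b := by
  rcases le_total a b with hab | hab
  · have h2 : u ^ a * u ^ (b - a) = u ^ a * 1 := by
      rw [mul_one, ← pow_add, Nat.add_sub_cancel' hab, h]
    have h3 : u ^ (b - a) = 1 := mul_left_cancel₀ (pow_ne_zero _ hu) h2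
    have h4 : orderOf u ∣ b - a := orderOf_dvd_of_pow_eq_one h3
    obtain ⟨c, hc⟩ := h4
    refine ⟨-c, ?_⟩
    zify [hab] at hc
    rw [mul_neg]
    linarith
  · have h2 : u ^ b * u ^ (a - b) = u ^ b * 1 := by
      rw [mul_one, ← pow_add, Nat.add_sub_cancel' hab, h.symm]
    have h3 : u ^ (a - b) = 1 := mul_left_cancel₀ (pow_ne_zero _ hu) h2
    obtain ⟨c, hc⟩ := orderOf_dvd_of_pow_eq_one h3
    refine ⟨c, ?_⟩
    zify [hab] at hc
    linarith

end CharLemmas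

lemma eps_eq (m p : ℕ) [Fact p.Prime] (hm0 : 0 < m)
    (ω : ZMod p) (hω : ∀ x : ZMod p, x ≠ 0 → ∃ j : ℕ, ω ^ j = x) (hω0 : ω ≠ 0)
    (hmp : m ∣ p - 1)
    (S : Finset ℕ) (hS : S ⊆ Finset.range m)
    (D : Finset (ZMod p))
    (hD : ∀ x : ZMod p, x ∈ D ↔ ∃ s ∈ S, ∃ y : ZMod p, y ≠ 0 ∧ x = ω ^ s * y ^ m)
    (χ : MulChar (ZMod p) ℂ) (hχ : orderOf χ = m)
    (x : ZMod p) (hx : x ≠ 0) :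
    (if x ∈ D then (1 : ℂ) else -1)
      = (2 / (m : ℂ)) *
          (∑ j ∈ Finset.range m,
            (∑ s ∈ S, (starRingEnd ℂ) ((χ ^ j) (ω ^ s))) * (χ ^ j) x) - 1 := by
  classical
  have hp : p.Prime := Fact.out
  have hmC : (m : ℂ) ≠ 0 := Nat.cast_ne_zero.mpr hm0.ne'
  have hχm : χ ^ m = 1 := hχ ▸ pow_orderOf_eq_one χ
  have hval : ∀ a : ZMod p, a ≠ 0 → χ a ^ m = 1 := by
    intro a ha
    rw [← mulchar_pow_apply χ m ha, hχm, mulchar_one_apply ha]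
  have hu : orderOf (χ ω) = m := by rw [orderOf_apply_gen χ ω hω hω0, hχ]
  have hune : χ ω ≠ 0 := by
    intro h0
    have := hval ω hω0
    rw [h0, zero_pow hm0.ne'] at this
    exact zero_ne_one this
  have hωs : ∀ s : ℕ, ω ^ s ≠ 0 := fun s => pow_ne_zero s hω0
  -- if m divides a - s with s ∈ S then ω^a ∈ D
  have subA : ∀ s ∈ S, ∀ a : ℕ, ((m : ℤ) ∣ (a : ℤ) - s) → ω ^ a ∈ D := by
    intro s hsS a hdvd
    have hω1 : ω ^ (p - 1) = 1 := ZMod.pow_card_sub_one_eq_one hω0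
    have hp2 : 2 ≤ p := hp.two_le
    set a' := a + s * (p - 1) with ha'
    have h1 : ω ^ a' = ω ^ a := by
      rw [ha', pow_add, mul_comm s (p - 1), pow_mul, hω1, one_pow, mul_one]
    have hs_le : s ≤ a' := by
      have : 1 ≤ p - 1 := by omega
      calc s = s * 1 := (mul_one s).symm
        _ ≤ s * (p - 1) := Nat.mul_le_mul_left s this
        _ ≤ a' := by omega
    have h2 : m ∣ a' - s := by
      have hd2 : (m : ℤ) ∣ ((a' : ℤ) - s) := by
        have hd3 : (m : ℤ) ∣ (s : ℤ) * ((p : ℤ) - 1) := by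
          obtain ⟨c, hc⟩ := hmp
          refine ⟨s * c, ?_⟩
          zify [show 1 ≤ p by omega] at hc
          linear_combination (s : ℤ) * hc
        have : (a' : ℤ) - s = ((a : ℤ) - s) + s * ((p : ℤ) - 1) := by
          rw [ha']
          push_cast [Nat.cast_sub (by omega : 1 ≤ p)]
          ring
        rw [this]
        exact dvd_add hdvd hd3
      have hd4 : (m : ℤ) ∣ ((a' - s : ℕ) : ℤ) := by rwa [Nat.cast_sub hs_le]
      exact_mod_cast hd4
    obtain ⟨c, hc⟩ := h2
    have ha2 : a' = s + m * c := by omega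
    rw [← h1, ha2, pow_add, mul_comm m c, pow_mul]
    exact (hD _).mpr ⟨s, hsS, ω ^ c, pow_ne_zero c hω0, rfl⟩
  -- x = ω ^ a
  obtain ⟨a, ha⟩ := hω x hx
  -- χ x = χ (ω^s) → x ∈ D, for s ∈ S
  have claim_mem : ∀ s ∈ S, χ x = χ (ω ^ s) → x ∈ D := by
    intro s hsS hxs
    rw [← ha, map_pow, map_pow] at hxs
    have := pow_eq_pow_dvd hune hxs
    rw [hu] at this
    rw [← ha]
    exact subA s hsS a this
  have claim_ex : x ∈ D → ∃ s ∈ S, χ x = χ (ω ^ s) := by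
    intro hxD
    obtain ⟨s, hsS, y, hy, hxy⟩ := (hD x).mp hxD
    refine ⟨s, hsS, ?_⟩
    rw [hxy, map_mul, map_pow χ y, hval y hy, mul_one]
  have claim_uniq : ∀ s₁ ∈ S, ∀ s₂ ∈ S, χ (ω ^ s₁) = χ (ω ^ s₂) → s₁ = s₂ := by
    intro s₁ h₁ s₂ h₂ heq
    rw [map_pow, map_pow] at heq
    obtain ⟨t, ht⟩ := hu ▸ pow_eq_pow_dvd hune heq
    have hb₁ : s₁ < m := Finset.mem_range.mp (hS h₁)
    have hb₂ : s₂ < m := Finset.mem_range.mp (hS h₂)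
    have hmt1 : (m : ℤ) * t < m := by
      rw [← ht]; push_cast; omega
    have hmt2 : -(m : ℤ) < m * t := by
      rw [← ht]; push_cast; omega
    have hmz : (0 : ℤ) < m := by exact_mod_cast hm0
    have ht0 : t = 0 := by
      rcases lt_trichotomy t 0 with h | h | h
      · have : (m : ℤ) * t ≤ m * (-1) := by
          apply mul_le_mul_of_nonneg_left (by omega) hmz.le
        linarith
      · exact h
      · have : (m : ℤ) * 1 ≤ m * t := by
          apply mul_le_mul_of_nonneg_left (by omega) hmz.le
        linarith
    rw [ht0, mul_zero] at ht
    omega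
  -- counting
  have hcount : ((S.filter (fun s => χ x = χ (ω ^ s))).card : ℂ)
      = if x ∈ D then 1 else 0 := by
    split_ifs with hxD
    · obtain ⟨s₀, hs₀S, hs₀⟩ := claim_ex hxD
      have : S.filter (fun s => χ x = χ (ω ^ s)) = {s₀} := by
        ext t
        simp only [Finset.mem_filter, Finset.mem_singleton]
        constructor
        · rintro ⟨htS, hteq⟩
          exact claim_uniq t htS s₀ hs₀S (hteq.symm.trans hs₀)
        · rintro rfl
          exact ⟨hs₀S, hs₀⟩
      rw [this]; simp
    · have : S.filter (fun s => χ x = χ (ω ^ s)) = ∅ := by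
        rw [Finset.filter_eq_empty_iff]
        intro s hsS heq
        exact hxD (claim_mem s hsS heq)
      rw [this]; simp
  -- main computation
  have hsum : (∑ j ∈ Finset.range m,
      (∑ s ∈ S, (starRingEnd ℂ) ((χ ^ j) (ω ^ s))) * (χ ^ j) x)
      = (m : ℂ) * (if x ∈ D then 1 else 0) := by
    have step1 : ∀ j ∈ Finset.range m,
        (∑ s ∈ S, (starRingEnd ℂ) ((χ ^ j) (ω ^ s))) * (χ ^ j) x
          = ∑ s ∈ S, ((starRingEnd ℂ) (χ (ω ^ s)) * χ x) ^ j := by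
      intro j _
      rw [Finset.sum_mul]
      refine Finset.sum_congr rfl fun s _ => ?_
      rw [mulchar_pow_apply χ j (hωs s), mulchar_pow_apply χ j hx, map_pow, mul_pow]
    rw [Finset.sum_congr rfl step1, Finset.sum_comm]
    have step2 : ∀ s ∈ S, ∑ j ∈ Finset.range m, ((starRingEnd ℂ) (χ (ω ^ s)) * χ x) ^ j
        = if χ x = χ (ω ^ s) then (m : ℂ) else 0 := by
      intro s _
      have hzs : χ (ω ^ s) ^ m = 1 := hval _ (hωs s)
      have hzsne : χ (ω ^ s) ≠ 0 := by
        intro h0; rw [h0, zero_pow hm0.ne'] at hzs; exact zero_ne_one hzs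
      have hconj : (starRingEnd ℂ) (χ (ω ^ s)) * χ (ω ^ s) = 1 :=
        conj_mul_self hm0.ne' hzs
      have hcne : (starRingEnd ℂ) (χ (ω ^ s)) ≠ 0 := by
        simpa using hzsne
      have hwm : ((starRingEnd ℂ) (χ (ω ^ s)) * χ x) ^ m = 1 := by
        rw [mul_pow, ← map_pow, hzs, map_one, one_mul, hval x hx]
      rw [geom_sum_root hwm]
      congr 1
      simp only [eq_iff_iff]
      constructor
      · intro h
        have := mul_left_cancel₀ hcne (h.trans hconj.symm)
        exact this
      · intro h
        rw [h]; exact hconj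
    rw [Finset.sum_congr rfl step2, ← Finset.sum_filter, Finset.sum_const, nsmul_eq_mul,
      hcount]
    ring
  rw [hsum]
  split_ifs with hxD
  · field_simp
    norm_num
  · field_simp
    norm_num

lemma T_eq (m p : ℕ) [Fact p.Prime] (hm0 : 0 < m) (ψ : MulChar (ZMod p) ℂ)
    (hψ1 : ψ ≠ 1) (hψm : ψ ^ m = 1) (k : ZMod p) :
    ∑ x ∈ Finset.univ.filter (fun x : ZMod p => x ≠ 0), ψ x * eP p (k * x)
      = (starRingEnd ℂ) (ψ k) * gaussP p ψ := by
  classical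
  by_cases hk : k = 0
  · subst hk
    have hψ0 : ψ (0 : ZMod p) = 0 := by
      apply MulChar.map_nonunit
      simpa using not_isUnit_zero
    have heP0 : eP p (0 : ZMod p) = 1 := by
      simp [eP]
    have hL : ∑ x ∈ Finset.univ.filter (fun x : ZMod p => x ≠ 0), ψ x * eP p (0 * x)
        = ∑ x : ZMod p, ψ x := by
      simp only [zero_mul, heP0, mul_one]
      apply Finset.sum_subset (Finset.filter_subset _ _)
      intro x _ hxf
      have : x = 0 := by
        by_contra h
        exact hxf (Finset.mem_filter.mpr ⟨Finset.mem_univ x, h⟩)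
      rw [this, hψ0]
    rw [hL, MulChar.sum_eq_zero_of_ne_one hψ1, hψ0, map_zero, zero_mul]
  · have hku : IsUnit k := isUnit_iff_ne_zero.mpr hk
    have hψk : ψ k ^ m = 1 := by
      rw [← mulchar_pow_apply ψ m hk, hψm, mulchar_one_apply hk]
    have hconj : (starRingEnd ℂ) (ψ k) * ψ k = 1 := conj_mul_self hm0.ne' hψk
    rw [gaussP, Finset.mul_sum]
    refine Finset.sum_nbij' (i := fun x => k * x) (j := fun y => k⁻¹ * y) ?_ ?_ ?_ ?_ ?_
    · intro x hx
      simp only [Finset.mem_filter, Finset.mem_univ, true_and] at hx ⊢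
      exact mul_ne_zero hk hx
    · intro y hy
      simp only [Finset.mem_filter, Finset.mem_univ, true_and] at hy ⊢
      exact mul_ne_zero (inv_ne_zero hk) hy
    · intro x _
      field_simp
    · intro y _
      field_simp
    · intro x _
      rw [map_mul]
      calc ψ x * eP p (k * x) = ((starRingEnd ℂ) (ψ k) * ψ k) * (ψ x * eP p (k * x)) := by
            rw [hconj, one_mul]
        _ = (starRingEnd ℂ) (ψ k) * (ψ k * ψ x * eP p (k * x)) := by ring

/-- Evaluation at `p`-th roots of unity of the characteristic polynomial of a union `D` of
`m/2` cyclotomic classes of order `m`: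
`f(e^{2πik/p}) = (2/m) ∑_{j=1}^{m-1} G(χ^j) conj(χ^j(k)) ∑_{s∈S} conj(χ^j(ω^s)) - 1`. -/
theorem cyclotomic_poly_values (m p : ℕ) [Fact p.Prime] (hm : Even m) (hm0 : 0 < m)
    (hpm : p ≡ 1 [MOD m])
    (ω : ZMod p) (hω : ∀ x : ZMod p, x ≠ 0 → ∃ j : ℕ, ω ^ j = x)
    (S : Finset ℕ) (hS : S ⊆ Finset.range m) (hScard : 2 * S.card = m)
    (D : Finset (ZMod p))
    (hD : ∀ x : ZMod p, x ∈ D ↔ ∃ s ∈ S, ∃ y : ZMod p, y ≠ 0 ∧ x = ω ^ s * y ^ m)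
    (χ : MulChar (ZMod p) ℂ) (hχ : orderOf χ = m)
    (f : ℂ → ℂ)
    (hf : ∀ z : ℂ, f z =
      ∑ j ∈ Finset.range p, (if (j : ZMod p) ∈ D then (1 : ℂ) else -1) * z ^ j) :
    ∀ k : ℤ,
      f (Complex.exp (2 * Real.pi * Complex.I * (k : ℂ) / p))
        = (2 / (m : ℂ)) * ∑ j ∈ Finset.Icc 1 (m - 1),
            gaussP p (χ ^ j) * (starRingEnd ℂ) ((χ ^ j) (k : ZMod p)) *
              (∑ s ∈ S, (starRingEnd ℂ) ((χ ^ j) (ω ^ s)))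
          - 1 := by
  classical
  intro k
  have hp : p.Prime := Fact.out
  have hm2 : 2 ≤ m := by obtain ⟨r, hr⟩ := hm; omega
  have hmp : m ∣ p - 1 := (Nat.modEq_iff_dvd' hp.one_lt.le).mp hpm.symm
  have hp3 : 3 ≤ p := by
    have h1 : 0 < p - 1 := by have := hp.two_le; omega
    have := Nat.le_of_dvd h1 hmp
    omega
  have hne1 : ((-1 : ZMod p)) ≠ 0 := by
    simp
  have hω0 : ω ≠ 0 := by
    obtain ⟨j, hj⟩ := hω (-1) hne1
    intro h0
    rw [h0] at hj
    rcases Nat.eq_zero_or_pos j with hj0 | hj0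
    · rw [hj0, pow_zero] at hj
      have h2 : ((2 : ℕ) : ZMod p) = 0 := by
        push_cast
        linear_combination hj
      have h3 := (ZMod.natCast_eq_zero_iff 2 p).mp h2
      have := Nat.le_of_dvd (by norm_num) h3
      omega
    · rw [zero_pow hj0.ne'] at hj
      exact hne1 hj.symm
  have h0D : (0 : ZMod p) ∉ D := by
    intro h
    obtain ⟨s, hs, y, hy, hxy⟩ := (hD 0).mp h
    exact (mul_ne_zero (pow_ne_zero s hω0) (pow_ne_zero m hy)) hxy.symm
  have hmC : (m : ℂ) ≠ 0 := Nat.cast_ne_zero.mpr hm0.ne'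
  set kk : ZMod p := (k : ZMod p) with hkk
  rw [hf]
  have hstep1 : ∀ j ∈ Finset.range p,
      (if ((j : ℕ) : ZMod p) ∈ D then (1:ℂ) else -1) *
          (Complex.exp (2 * Real.pi * Complex.I * (k : ℂ) / p)) ^ j
      = (if ((j : ℕ) : ZMod p) ∈ D then (1:ℂ) else -1) * eP p (kk * ((j : ℕ) : ZMod p)) := by
    intro j hj
    congr 1
    have hz : Complex.exp (2 * Real.pi * Complex.I * (k : ℂ) / p) = zetaP p ^ k := by
      rw [zetaP,
        show (2 * Real.pi * Complex.I * (k : ℂ) / p)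
          = (k : ℂ) * (2 * Real.pi * Complex.I / p) by ring,
        Complex.exp_int_mul]
    rw [hz, ← zpow_natCast (zetaP p ^ k) j, ← zpow_mul, eP_eq_zetaP]
    apply zetaP_congr p hp.pos.ne'
    have h2 : (((kk * ((j : ℕ) : ZMod p)).val : ℕ) : ZMod p) = kk * ((j : ℕ) : ZMod p) :=
      ZMod.natCast_rightInverse _
    rw [hkk] at h2
    push_cast [h2, hkk]
    ring
  rw [Finset.sum_congr rfl hstep1]
  have hreindex : ∑ j ∈ Finset.range p,
        (if ((j : ℕ) : ZMod p) ∈ D then (1:ℂ) else -1) * eP p (kk * ((j : ℕ) : ZMod p))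
      = ∑ x : ZMod p, (if x ∈ D then (1:ℂ) else -1) * eP p (kk * x) := by
    refine Finset.sum_nbij' (i := fun j => ((j : ℕ) : ZMod p)) (j := fun x => x.val)
      ?_ ?_ ?_ ?_ ?_
    · intro a _; exact Finset.mem_univ _
    · intro x _; exact Finset.mem_range.mpr (ZMod.val_lt x)
    · intro a ha; exact ZMod.val_natCast_of_lt (Finset.mem_range.mp ha)
    · intro x _; exact ZMod.natCast_rightInverse x
    · intro a _; rfl
  rw [hreindex,
    ← Finset.add_sum_erase Finset.univ _ (Finset.mem_univ (0 : ZMod p)),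
    ← Finset.filter_ne' Finset.univ (0 : ZMod p)]
  have h0term : (if (0 : ZMod p) ∈ D then (1:ℂ) else -1) * eP p (kk * 0) = -1 := by
    rw [mul_zero, if_neg h0D]
    simp [eP]
  rw [h0term]
  -- the main sum over nonzero x
  have hkey : ∑ x ∈ Finset.univ.filter (fun x : ZMod p => x ≠ 0),
      (if x ∈ D then (1:ℂ) else -1) * eP p (kk * x)
      = (2 / (m : ℂ)) * ∑ j ∈ Finset.Icc 1 (m - 1),
          gaussP p (χ ^ j) * (starRingEnd ℂ) ((χ ^ j) kk) *
            (∑ s ∈ S, (starRingEnd ℂ) ((χ ^ j) (ω ^ s))) := by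
    set filt := Finset.univ.filter (fun x : ZMod p => x ≠ 0) with hfilt
    set c : ℕ → ℂ := fun j => ∑ s ∈ S, (starRingEnd ℂ) ((χ ^ j) (ω ^ s)) with hc
    set T : ℕ → ℂ := fun j => ∑ x ∈ filt, (χ ^ j) x * eP p (kk * x) with hT
    set T0 : ℂ := ∑ x ∈ filt, eP p (kk * x) with hT0def
    have step1 : ∀ x ∈ filt,
        (if x ∈ D then (1:ℂ) else -1) * eP p (kk * x)
        = (2 / (m:ℂ)) * ((∑ j ∈ Finset.range m, c j * (χ ^ j) x) * eP p (kk * x))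
            - eP p (kk * x) := by
      intro x hx
      have hx0 : x ≠ 0 := (Finset.mem_filter.mp hx).2
      rw [eps_eq m p hm0 ω hω hω0 hmp S hS D hD χ hχ x hx0]
      ring
    rw [Finset.sum_congr rfl step1, Finset.sum_sub_distrib, ← Finset.mul_sum]
    have step3 : ∑ x ∈ filt, (∑ j ∈ Finset.range m, c j * (χ ^ j) x) * eP p (kk * x)
        = ∑ j ∈ Finset.range m, c j * T j := by
      simp_rw [Finset.sum_mul]
      rw [Finset.sum_comm]
      refine Finset.sum_congr rfl fun j _ => ?_
      rw [hT, Finset.mul_sum]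
      exact Finset.sum_congr rfl fun x _ => by ring
    rw [step3]
    have hsplit : Finset.range m = insert 0 (Finset.Icc 1 (m - 1)) := by
      ext t
      simp only [Finset.mem_range, Finset.mem_insert, Finset.mem_Icc]
      omega
    have h0notin : (0 : ℕ) ∉ Finset.Icc 1 (m - 1) := by simp
    rw [hsplit, Finset.sum_insert h0notin]
    have hT0 : T 0 = T0 := by
      rw [hT, hT0def]
      refine Finset.sum_congr rfl fun x hx => ?_
      have hx0 : x ≠ 0 := (Finset.mem_filter.mp hx).2
      rw [pow_zero, mulchar_one_apply hx0, one_mul]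
    have hc0 : c 0 = (S.card : ℂ) := by
      have h1 : ∀ s ∈ S, (starRingEnd ℂ) ((χ ^ 0) (ω ^ s)) = 1 := by
        intro s _
        rw [pow_zero, mulchar_one_apply (pow_ne_zero s hω0), map_one]
      calc c 0 = ∑ s ∈ S, (starRingEnd ℂ) ((χ ^ 0) (ω ^ s)) := rfl
        _ = ∑ s ∈ S, 1 := Finset.sum_congr rfl h1
        _ = (S.card : ℂ) := by rw [Finset.sum_const, nsmul_eq_mul, mul_one]
    have hcard : (2 / (m : ℂ)) * (S.card : ℂ) = 1 := by
      have h2 : ((2 * S.card : ℕ) : ℂ) = (m : ℂ) := by rw [hScard]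
      push_cast at h2
      field_simp
      linear_combination h2
    have hTj : ∀ j ∈ Finset.Icc 1 (m - 1),
        c j * T j = gaussP p (χ ^ j) * (starRingEnd ℂ) ((χ ^ j) kk) * c j := by
      intro j hj
      obtain ⟨hj1, hj2⟩ := Finset.mem_Icc.mp hj
      have hTeq : T j = (starRingEnd ℂ) ((χ ^ j) kk) * gaussP p (χ ^ j) := by
        rw [hT]
        refine T_eq m p hm0 (χ ^ j) ?_ ?_ kk
        · apply pow_ne_one_of_lt_orderOf (by omega)
          rw [hχ]; omega
        · have hχm : χ ^ m = 1 := by rw [← hχ]; exact pow_orderOf_eq_one χ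
          rw [← pow_mul, mul_comm, pow_mul, hχm, one_pow]
      rw [hTeq]
      ring
    rw [Finset.sum_congr rfl hTj, hT0, hc0, mul_add, ← mul_assoc, hcard, one_mul]
    ring
  rw [hkey]
  ring
end
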